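/- arXiv:1404.3906 — 2 statements merged into one kernel-verified Lean document; each statement's English description precedes it below -/
import Mathlib

section
/- Let n ≥ 4 and let q ≥ 1 be the integer with 2^q ≤ n < 2^{q+1}, and set u_min(n) = (2^{q−1} − (n mod 2^{q−1})) mod 2^{q−1}. Then (i) every factor w of the Thue–Morse word t of length n uniquely determines at least u_min(n) letters: there exist natural numbers ℓ₁, ℓ₂ with ℓ₁ + ℓ₂ = u_min(n) and exactly one pair of binary words (v₁, v₂) with |v₁| = ℓ₁ and |v₂| = ℓ₂ such that the concatenation v₁ w v₂ is a factor of t; and (ii) the bound is sharp: there exists a factor w of t of length n such that for all ℓ₁, ℓ₂ with ℓ₁ + ℓ₂ > u_min(n) there are at least two distinct pairs (v₁, v₂) of binary words with |v₁| = ℓ₁, |v₂| = ℓ₂ and v₁ w v₂ a factor of t. -/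
/-- The Thue–Morse sequence: sum of binary digits of `n`, mod 2. -/
def tm (n : ℕ) : Fin 2 := Fin.ofNat 2 (Nat.digits 2 n).sum

/-- The factor of the Thue–Morse word of length `n` starting at position `i`. -/
def tmWord (i n : ℕ) : List (Fin 2) := (List.range n).map (fun j => tm (i + j))

/-- A binary word is a factor of the Thue–Morse word. -/
def IsFactor (w : List (Fin 2)) : Prop := ∃ i : ℕ, w = tmWord i w.length

/-- Number of occurrences of the word `x` as a factor of `u`. -/
def occCount (u x : List (Fin 2)) : ℕ :=
  ((List.range u.length).filter (fun i => (u.drop i).take x.length = x)).length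

/-- Two binary words (of equal length) are 2-abelian equivalent: same first letter,
same last letter, and the same number of occurrences of every word of length 2. -/
def TwoAbelianEquiv (u v : List (Fin 2)) : Prop :=
  u.length = v.length ∧ u.take 1 = v.take 1 ∧
  u.drop (u.length - 1) = v.drop (v.length - 1) ∧
  ∀ x : List (Fin 2), x.length = 2 → occCount u x = occCount v x

/-- `P n` is the 2-abelian complexity of the Thue–Morse word: the number of
2-abelian equivalence classes of factors of length `n`. -/
noncomputable def P (n : ℕ) : ℕ :=
  Nat.card (Quot (fun u v : {w : List (Fin 2) // w.length = n ∧ IsFactor w} =>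
    TwoAbelianEquiv u.1 v.1))

/-- `pword w` counts the pairs in `w`: the total number of occurrences of `00` and `11`. -/
def pword (w : List (Fin 2)) : ℕ := occCount w [0, 0] + occCount w [1, 1]

/-- The set of possible pair counts of Thue–Morse factors of length `n`. -/
def pairs (n : ℕ) : Set ℕ :=
  { m | ∃ w : List (Fin 2), w.length = n ∧ IsFactor w ∧ pword w = m }

/-- The set of possible pair counts of Thue–Morse factors of length `n`
occurring at some odd position (pure odd factors). -/
def PAIRS (n : ℕ) : Set ℕ := { m | ∃ i : ℕ, i % 2 = 1 ∧ pword (tmWord i n) = m }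


/-! ### Auxiliary development -/

open Fin.NatCast

section ThueMorseAux

lemma tm_div2 (n : ℕ) : tm n = tm (n/2) + ((n % 2 : ℕ) : Fin 2) := by
  rcases Nat.eq_zero_or_pos n with h | h
  · subst h; norm_num [tm]
  · unfold tm
    rw [Fin.ofNat_eq_cast, Fin.ofNat_eq_cast]
    rw [Nat.digits_def' (by norm_num : 1 < 2) h]
    push_cast [List.sum_cons]
    rw [add_comm]

lemma tm_two_mul (j : ℕ) : tm (2*j) = tm j := by
  have h := tm_div2 (2*j)
  simp [Nat.mul_div_cancel_left, Nat.mul_mod_right] at h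
  simpa using h

lemma tm_two_mul_add_one (j : ℕ) : tm (2*j+1) = tm j + 1 := by
  have h := tm_div2 (2*j+1)
  have h1 : (2*j+1)/2 = j := by omega
  have h2 : (2*j+1)%2 = 1 := by omega
  rw [h1, h2] at h
  simpa using h

lemma fin2_add_one_ne (x : Fin 2) : x + 1 ≠ x := by omega

lemma tm_no_cube (k : ℕ) : ¬ (tm k = tm (k+1) ∧ tm (k+1) = tm (k+2)) := by
  rintro ⟨h1, h2⟩
  rcases Nat.even_or_odd k with ⟨s, hs⟩ | ⟨s, hs⟩
  · subst hs
    rw [show s + s = 2*s by ring] at h1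
    rw [show 2*s + 1 = 2*s+1 by ring, tm_two_mul, tm_two_mul_add_one] at h1
    exact fin2_add_one_ne _ h1.symm
  · subst hs
    rw [show 2*s+1+1 = 2*(s+1) by ring, show 2*s+1+2 = 2*(s+1)+1 by ring,
      tm_two_mul, tm_two_mul_add_one] at h2
    exact fin2_add_one_ne _ h2.symm

lemma tm_pow_mul_add (k : ℕ) : ∀ a j, j < 2^k → tm (2^k * a + j) = tm a + tm j := by
  induction k with
  | zero => intro a j hj; interval_cases j; simp [show tm 0 = 0 by norm_num [tm]]
  | succ k ih =>
    intro a j hj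
    have h1 : 2^(k+1) * a + j = 2 * (2^k * a + j/2) + j % 2 := by
      have : 2^(k+1) * a = 2 * (2^k * a) := by rw [pow_succ]; ring
      omega
    have h2 : j/2 < 2^k := by
      rw [pow_succ] at hj; omega
    rcases Nat.even_or_odd j with hj2 | hj2
    · have : j % 2 = 0 := Nat.even_iff.mp hj2
      rw [h1, this, add_zero, tm_two_mul, ih _ _ h2, tm_div2 j, this]
      simp
    · have : j % 2 = 1 := Nat.odd_iff.mp hj2
      rw [h1, this, tm_two_mul_add_one, ih _ _ h2, tm_div2 j, this]
      push_cast
      rw [add_assoc]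

lemma tm_shift (K x : ℕ) (h : x < 2^K) : tm (3 * 2^K + x) = tm x := by
  rw [mul_comm, tm_pow_mul_add K 3 x h, show tm 3 = 0 by norm_num [tm], zero_add]

/-- Pointwise agreement of two windows of the Thue–Morse word. -/
def Eqw (i i' n : ℕ) : Prop := ∀ d < n, tm (i + d) = tm (i' + d)

-- tmWord basics
@[simp] lemma tmWord_length (i n : ℕ) : (tmWord i n).length = n := by
  simp [tmWord]

lemma isFactor_tmWord (i n : ℕ) : IsFactor (tmWord i n) := ⟨i, by simp⟩

lemma tmWord_eq_iff {i i' n : ℕ} : tmWord i n = tmWord i' n ↔ Eqw i i' n := by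
  constructor
  · intro h d hd
    have := congrArg (fun l : List (Fin 2) => l[d]?) h
    simpa [tmWord, List.getElem?_map, List.getElem?_range, hd] using this
  · intro h
    unfold tmWord
    apply List.map_congr_left ?_
    intro d hd
    exact h d (List.mem_range.mp hd)

lemma tmWord_append (i m k : ℕ) : tmWord i (m+k) = tmWord i m ++ tmWord (i+m) k := by
  unfold tmWord
  rw [List.range_add, List.map_append, List.map_map]
  congr 1
  apply List.map_congr_left
  intro d _
  simp; ring_nf

lemma tmWord_split {a b : List (Fin 2)} {g : ℕ}
    (h : a ++ b = tmWord g (a.length + b.length)) :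
    a = tmWord g a.length ∧ b = tmWord (g + a.length) b.length := by
  rw [tmWord_append] at h
  exact List.append_inj h (by simp)

lemma tm_sync {i j : ℕ} (hi : i % 2 = 0) (hj : j % 2 = 1)
    (h : ∀ d < 4, tm (i+d) = tm (j+d)) : False := by
  obtain ⟨s, rfl⟩ : ∃ s, i = 2*s := ⟨i/2, by omega⟩
  obtain ⟨t, rfl⟩ : ∃ t, j = 2*t+1 := ⟨j/2, by omega⟩
  have e0 := h 0 (by norm_num)
  have e1 := h 1 (by norm_num)
  have e2 := h 2 (by norm_num)
  have e3 := h 3 (by norm_num)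
  rw [add_zero, add_zero, tm_two_mul, tm_two_mul_add_one] at e0
  rw [show 2*s+1 = 2*s+1 from rfl, show 2*t+1+1 = 2*(t+1) by ring,
    tm_two_mul_add_one, tm_two_mul] at e1
  rw [show 2*s+2 = 2*(s+1) by ring, show 2*t+0+1+2 = 2*(t+1)+1 by ring,
    tm_two_mul, tm_two_mul_add_one] at e2
  rw [show 2*s+3 = 2*(s+1)+1 by ring, show 2*t+1+3 = 2*(t+2) by ring,
    tm_two_mul_add_one, tm_two_mul] at e3
  refine tm_no_cube t ⟨?_, ?_⟩
  · revert e0 e1; generalize tm s = x; generalize tm t = y; generalize tm (t+1) = y'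
    intro e0 e1; omega
  · revert e0 e2 e3
    generalize tm s = x; generalize tm (s+1) = x'
    generalize tm t = y; generalize tm (t+1) = y'; generalize tm (t+2) = y''
    intro e0 e2 e3; omega

lemma tm_parity {i i' n : ℕ} (hn : 4 ≤ n) (h : Eqw i i' n) : i % 2 = i' % 2 := by
  have h4 : ∀ d < 4, tm (i+d) = tm (i'+d) := fun d hd => h d (by omega)
  rcases (show i % 2 = 0 ∨ i % 2 = 1 by omega) with h1 | h1 <;>
  rcases (show i' % 2 = 0 ∨ i' % 2 = 1 by omega) with h2 | h2 <;>
    simp [h1, h2]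
  · exact absurd h4 (fun hh => tm_sync h1 h2 hh)
  · exact absurd (fun d hd => (h4 d hd).symm) (fun hh => tm_sync h2 h1 hh)

lemma eq_up {j j' m : ℕ} (h : Eqw j j' m) : Eqw (2*j) (2*j') (2*m) := by
  intro p hp
  have hf : p/2 < m := by omega
  have h2 : 2*j + p = 2*(j + p/2) + p % 2 := by omega
  have h2' : 2*j' + p = 2*(j' + p/2) + p % 2 := by omega
  rcases (show p % 2 = 0 ∨ p % 2 = 1 by omega) with h1 | h1
  · rw [h2, h2', h1, add_zero, add_zero, tm_two_mul, tm_two_mul, h _ hf]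
  · rw [h2, h2', h1, tm_two_mul_add_one, tm_two_mul_add_one, h _ hf]

lemma eqw_shift {i i' n : ℕ} (h : Eqw i i' n) (c d : ℕ) (hcd : c + d ≤ n) :
    Eqw (i+c) (i'+c) d := by
  intro e he
  have := h (c+e) (by omega)
  rwa [← add_assoc, ← add_assoc] at this

lemma eqw_symm' {i i' n : ℕ} (h : Eqw i i' n) : Eqw i' i n := fun d hd => (h d hd).symm

lemma eqw_trans {i i' i'' n : ℕ} (h : Eqw i i' n) (h' : Eqw i' i'' n) : Eqw i i'' n :=
  fun d hd => (h d hd).trans (h' d hd)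

lemma eq_down {j j' a b n n' : ℕ} (ha : a < 2) (hb : b < 2) (hn : 2*n' = n + a + b)
    (hn' : 1 ≤ n') (hn0 : 1 ≤ n) (h : Eqw (2*j+a) (2*j'+a) n) : Eqw j j' n' := by
  intro f hf
  rcases (show a = 0 ∨ a = 1 by omega) with rfl | rfl
  · have hd : 2*f < n := by omega
    have := h (2*f) hd
    rw [add_zero, add_zero, show 2*j+2*f = 2*(j+f) by ring, show 2*j'+2*f = 2*(j'+f) by ring,
      tm_two_mul, tm_two_mul] at this
    exact this
  · rcases Nat.eq_zero_or_pos f with rfl | hf1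
    · have := h 0 (by omega)
      rw [add_zero, add_zero, tm_two_mul_add_one, tm_two_mul_add_one] at this
      have h2 : tm j + 1 = tm j' + 1 := this
      simpa using add_right_cancel h2
    · have hd : 2*f - 1 < n := by omega
      have := h (2*f-1) hd
      rw [show 2*j+1+(2*f-1) = 2*(j+f) by omega, show 2*j'+1+(2*f-1) = 2*(j'+f) by omega,
        tm_two_mul, tm_two_mul] at this
      exact this

/-- Left context lifting. -/
lemma ctxL {j j' a lam n' : ℕ} (ha : a < 2) (hj : lam ≤ j) (hj' : lam ≤ j')
    (hw : Eqw j j' n') (hn' : 1 ≤ n')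
    (hx : Eqw (j-lam) (j'-lam) lam) :
    Eqw (2*(j-lam)) (2*(j'-lam)) (2*lam + a) := by
  intro p hp
  rcases (show p < 2*lam ∨ (p = 2*lam ∧ a = 1) by omega) with hp2 | ⟨rfl, rfl⟩
  · exact eq_up hx p hp2
  · rw [show 2*(j-lam) + 2*lam = 2*j by omega, show 2*(j'-lam) + 2*lam = 2*j' by omega,
      tm_two_mul, tm_two_mul]
    simpa using hw 0 (by omega)

/-- Right context lifting. -/
lemma ctxR {j j' b lam n' : ℕ} (hb : b < 2)
    (hw : Eqw j j' n') (hn' : 1 ≤ n')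
    (hx : Eqw (j+n') (j'+n') lam) :
    Eqw (2*(j+n') - b) (2*(j'+n') - b) (2*lam + b) := by
  intro e he
  rcases (show (e = 0 ∧ b = 1) ∨ (b ≤ e ∧ e - b < 2*lam) by omega) with ⟨rfl, rfl⟩ | ⟨hbe, he2⟩
  · rw [add_zero, add_zero, show 2*(j+n') - 1 = 2*(j+n'-1)+1 by omega,
      show 2*(j'+n') - 1 = 2*(j'+n'-1)+1 by omega, tm_two_mul_add_one, tm_two_mul_add_one]
    have := hw (n'-1) (by omega)
    rw [show j + (n'-1) = j+n'-1 by omega, show j' + (n'-1) = j'+n'-1 by omega] at this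
    rw [this]
  · rw [show 2*(j+n') - b + e = 2*(j+n') + (e-b) by omega,
      show 2*(j'+n') - b + e = 2*(j'+n') + (e-b) by omega]
    exact eq_up hx (e-b) he2

lemma mod_zero_of_dvd {a b : ℕ} (h : b ∣ a) : a % b = 0 := by
  obtain ⟨k, rfl⟩ := h; exact Nat.mul_mod_right b k

/-- The number of uniquely determined letters. -/
def U (n q : ℕ) : ℕ := (2 ^ (q - 1) - n % 2 ^ (q - 1)) % 2 ^ (q - 1)

lemma U_lt (n q : ℕ) : U n q < 2^(q-1) := Nat.mod_lt _ (Nat.pow_pos (by norm_num))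

lemma U_add_mod (n q : ℕ) : (n + U n q) % 2^(q-1) = 0 := by
  set m := 2^(q-1) with hm
  have hm0 : 0 < m := Nat.pow_pos (by norm_num)
  have hnm : n % m < m := Nat.mod_lt _ hm0
  have hdm : m * (n / m) + n % m = n := Nat.div_add_mod n m
  rcases Nat.eq_zero_or_pos (n % m) with h0 | h0
  · have hU : U n q = 0 := by unfold U; rw [← hm, h0, Nat.sub_zero, Nat.mod_self]
    rw [hU, add_zero, ← hdm, h0, add_zero, Nat.mul_mod_right]
  · have hU : U n q = m - n % m := by
      unfold U; rw [← hm]; exact Nat.mod_eq_of_lt (by omega)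
    have h2 : n + U n q = m * (n / m) + m := by omega
    rw [h2, Nat.mul_add_mod, Nat.mod_self]

lemma U_unique {n q y : ℕ} (hy : y < 2^(q-1)) (hmod : (n + y) % 2^(q-1) = 0) : y = U n q := by
  set m := 2^(q-1) with hm
  have h1 : (n + U n q) % m = 0 := U_add_mod n q
  have h2 : U n q < m := U_lt n q
  have d1 : m ∣ (n + y) := Nat.dvd_of_mod_eq_zero hmod
  have d2 : m ∣ (n + U n q) := Nat.dvd_of_mod_eq_zero h1
  rcases le_total y (U n q) with hle | hle
  · have : m ∣ (n + U n q) - (n + y) := Nat.dvd_sub d2 d1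
    have h3 : (n + U n q) - (n + y) = U n q - y := by omega
    rw [h3] at this
    rcases Nat.eq_zero_or_pos (U n q - y) with h4 | h4
    · omega
    · exact absurd (Nat.le_of_dvd h4 this) (by omega)
  · have : m ∣ (n + y) - (n + U n q) := Nat.dvd_sub d1 d2
    have h3 : (n + y) - (n + U n q) = y - U n q := by omega
    rw [h3] at this
    rcases Nat.eq_zero_or_pos (y - U n q) with h4 | h4
    · omega
    · exact absurd (Nat.le_of_dvd h4 this) (by omega)

lemma U_eq_zero_of_dvd {n q : ℕ} (h : n % 2^(q-1) = 0) : U n q = 0 := by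
  unfold U; rw [h, Nat.sub_zero, Nat.mod_self]

/-- Main arithmetic lemma for the halving step of part (i). -/
lemma A1 {q n a b n' : ℕ} (hq : 2 ≤ q) (h1 : 2^q ≤ n) (h2 : n < 2^(q+1))
    (ha : a < 2) (hb : b < 2) (h2n : 2*n' = n + a + b) (hU : U n q ≠ 0) :
    ∃ q', 1 ≤ q' ∧ 2^q' ≤ n' ∧ n' < 2^(q'+1) ∧ U n q = 2 * U n' q' + a + b := by
  set m := 2^(q-1) with hm
  have hmq : 2 * m = 2^q := by rw [hm, ← pow_succ']; congr 1; omega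
  have hmq1 : 4 * m = 2^(q+1) := by
    rw [hm, show q+1 = (q-1)+2 by omega, pow_add]; ring
  have hm0 : 0 < m := Nat.pow_pos (by norm_num)
  have hUlt : U n q < m := U_lt n q
  have hUmod : (n + U n q) % m = 0 := U_add_mod n q
  have hnZ : ¬ (m ∣ n) := by
    intro hd
    exact hU (U_eq_zero_of_dvd (mod_zero_of_dvd hd))
  rcases (show n' < 2^q ∨ n' = 2^q by omega) with hlt | heq
  · refine ⟨q-1, by omega, ?_, ?_, ?_⟩
    · have : 2^(q-1) = m := rfl
      omega
    · rw [show q-1+1 = q by omega]; exact hlt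
    · set m2 := 2^(q-1-1) with hm2
      have hm2m : 2 * m2 = m := by
        rw [hm2, hm, ← pow_succ']; congr 1; omega
      have hU'lt : U n' (q-1) < m2 := U_lt n' (q-1)
      have hU'mod : (n' + U n' (q-1)) % m2 = 0 := U_add_mod n' (q-1)
      have hdvd : m ∣ 2 * (n' + U n' (q-1)) := by
        rw [← hm2m]
        exact Nat.mul_dvd_mul_left 2 (Nat.dvd_of_mod_eq_zero hU'mod)
      set y := 2 * U n' (q-1) + a + b with hy
      have hymod : (n + y) % m = 0 := by
        have : n + y = 2 * (n' + U n' (q-1)) := by omega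
        rw [this]; exact mod_zero_of_dvd hdvd
      have hym : y ≤ m := by omega
      rcases (show y < m ∨ y = m by omega) with hylt | hyeq
      · exact (U_unique hylt hymod).symm
      · exfalso
        rw [hyeq, Nat.add_mod_right] at hymod
        exact hnZ (Nat.dvd_of_mod_eq_zero hymod)
  · refine ⟨q, by omega, by omega, by omega, ?_⟩
    set y := 2 * U n' q + a + b with hy
    have hU' : U n' q = 0 := by
      apply U_eq_zero_of_dvd
      apply mod_zero_of_dvd
      rw [heq]
      exact pow_dvd_pow 2 (by omega)
    have hymod : (n + y) % m = 0 := by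
      have h3 : n + y = 4 * m := by omega
      rw [h3, show (4:ℕ) * m = m * 4 by ring, Nat.mul_mod_right]
    rcases (show y < m ∨ y = m by omega) with hylt | hyeq
    · exact (U_unique hylt hymod).symm
    · exfalso
      rw [hyeq, Nat.add_mod_right] at hymod
      exact hnZ (Nat.dvd_of_mod_eq_zero hymod)

/-- `Good N P P'`: two occurrences of the same word of length `N`, with differing
letters on the left and on the right. -/
def Good (N PA PB : ℕ) : Prop :=
  1 ≤ PA ∧ 1 ≤ PB ∧ Eqw PA PB N ∧ tm (PA-1) ≠ tm (PB-1) ∧ tm (PA+N) ≠ tm (PB+N)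

lemma good_double {N PA PB : ℕ} (h : Good N PA PB) : Good (2*N) (2*PA) (2*PB) := by
  obtain ⟨h1, h1', h2, h3, h4⟩ := h
  refine ⟨by omega, by omega, eq_up h2, ?_, ?_⟩
  · rw [show 2*PA-1 = 2*(PA-1)+1 by omega, show 2*PB-1 = 2*(PB-1)+1 by omega,
      tm_two_mul_add_one, tm_two_mul_add_one]
    intro hc
    exact h3 (add_right_cancel hc)
  · rw [show 2*PA+2*N = 2*(PA+N) by ring, show 2*PB+2*N = 2*(PB+N) by ring,
      tm_two_mul, tm_two_mul]
    exact h4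

lemma good_two : Good 2 3 6 := by
  refine ⟨by norm_num, by norm_num, ?_, ?_, ?_⟩
  · intro d hd
    interval_cases d <;> · norm_num [tm]; try decide
  · norm_num [tm]; try decide
  · norm_num [tm]; try decide

lemma good_three : Good 3 3 10 := by
  refine ⟨by norm_num, by norm_num, ?_, ?_, ?_⟩
  · intro d hd
    interval_cases d <;> · norm_num [tm]; try decide
  · norm_num [tm]; try decide
  · norm_num [tm]; try decide

lemma good_pow (k : ℕ) {c PA PB : ℕ} (h : Good c PA PB) :
    Good (2^k * c) (2^k * PA) (2^k * PB) := by
  induction k with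
  | zero => simpa using h
  | succ k ih =>
    have := good_double ih
    rw [show 2*(2^k*c) = 2^(k+1)*c by ring, show 2*(2^k*PA) = 2^(k+1)*PA by ring,
      show 2*(2^k*PB) = 2^(k+1)*PB by ring] at this
    exact this

lemma A2 {n q : ℕ} (hq : 1 ≤ q) (h1 : 2^q ≤ n) (h2 : n < 2^(q+1)) :
    ∃ PA PB, Good (n + U n q) PA PB := by
  set m := 2^(q-1) with hm
  have hm0 : 0 < m := Nat.pow_pos (by norm_num)
  have hmq : 2 * m = 2^q := by rw [hm, ← pow_succ']; congr 1; omega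
  have hdvd : m ∣ (n + U n q) := by
    have := U_add_mod n q
    exact Nat.dvd_of_mod_eq_zero this
  have hUlt : U n q < m := U_lt n q
  obtain ⟨s, hs⟩ := hdvd
  have hmq1 : 4 * m = 2^(q+1) := by
    rw [show q+1 = q-1+2 by omega, pow_add, hm]; ring
  have h1' : 2*m ≤ n := by omega
  have h2' : n < 4*m := by omega
  have hs2 : 2 ≤ s := by nlinarith
  have hs4 : s ≤ 4 := by nlinarith
  rcases (show s = 2 ∨ s = 3 ∨ s = 4 by omega) with rfl | rfl | rfl
  · have h := good_pow (q-1) good_two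
    rw [← hm] at h
    rw [hs, show m * 2 = m * 2 from rfl]
    exact ⟨_, _, by rw [show m * 2 = 2^(q-1)*2 by rw [hm]]; exact h⟩
  · have h := good_pow (q-1) good_three
    rw [← hm] at h
    exact ⟨_, _, by rw [hs, show m * 3 = 2^(q-1)*3 by rw [hm]]; exact h⟩
  · have h := good_pow q good_two
    exact ⟨_, _, by rw [hs, show m * 4 = 2^q*2 by rw [← hmq]; ring]; exact h⟩

lemma tmWord_ne {x y l d : ℕ} (hd : d < l) (h : tm (x+d) ≠ tm (y+d)) :
    tmWord x l ≠ tmWord y l := fun hc => h (tmWord_eq_iff.mp hc d hd)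

lemma occ_split {v1 w v2 : List (Fin 2)} {g : ℕ}
    (h : v1 ++ w ++ v2 = tmWord g ((v1 ++ w ++ v2).length)) :
    v1 = tmWord g v1.length ∧ w = tmWord (g + v1.length) w.length ∧
      v2 = tmWord (g + v1.length + w.length) v2.length := by
  rw [List.append_assoc] at h
  rw [show (v1 ++ (w ++ v2)).length = v1.length + (w ++ v2).length from
    List.length_append] at h
  obtain ⟨e1, e2⟩ := tmWord_split h
  rw [show (w ++ v2).length = w.length + v2.length from List.length_append] at e2
  obtain ⟨e3, e4⟩ := tmWord_split e2
  exact ⟨e1, e3, e4⟩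

lemma occ_join {g n l₁ l₂ : ℕ} {v1 w v2 : List (Fin 2)}
    (hv1 : v1 = tmWord g l₁) (hw : w = tmWord (g+l₁) n) (hv2 : v2 = tmWord (g+l₁+n) l₂) :
    IsFactor (v1 ++ w ++ v2) := by
  subst hv1; subst hw; subst hv2
  refine ⟨g, ?_⟩
  have hL : (tmWord g l₁ ++ tmWord (g+l₁) n ++ tmWord (g+l₁+n) l₂).length = l₁ + (n + l₂) := by
    simp [tmWord_length]
    try omega
  rw [hL]
  simp only [tmWord_append, List.append_assoc]

/-- Part (i), by strong induction. -/
lemma partI : ∀ n q : ℕ, 1 ≤ q → 2^q ≤ n → n < 2^(q+1) →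
    ∀ w : List (Fin 2), w.length = n → IsFactor w →
      ∃ l₁ l₂ : ℕ, l₁ + l₂ = U n q ∧
        ∃! vv : List (Fin 2) × List (Fin 2),
          vv.1.length = l₁ ∧ vv.2.length = l₂ ∧ IsFactor (vv.1 ++ w ++ vv.2) := by
  intro n
  induction n using Nat.strong_induction_on with
  | _ n IH =>
    intro q hq h1 h2 w hlen hfac
    rcases Nat.eq_zero_or_pos (U n q) with hU0 | hUpos
    · refine ⟨0, 0, by omega, ([], []), ⟨rfl, rfl, by simpa using hfac⟩, ?_⟩
      rintro ⟨v1, v2⟩ ⟨hv1, hv2, -⟩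
      simp only [Prod.mk.injEq]
      exact ⟨List.length_eq_zero_iff.mp hv1, List.length_eq_zero_iff.mp hv2⟩
    · have hU : U n q ≠ 0 := by omega
      have hq2 : 2 ≤ q := by
        by_contra hc
        have : q = 1 := by omega
        subst this
        simp [U] at hU; omega
      have hn4 : 4 ≤ n := le_trans (by norm_num : (4:ℕ) ≤ 2^2)
        (le_trans (Nat.pow_le_pow_right (by norm_num) hq2) h1)
      obtain ⟨i₀, hw⟩ := hfac
      rw [hlen] at hw
      set a := i₀ % 2 with ha_def
      set b := (i₀ + n) % 2 with hb_def
      have ha : a < 2 := by omega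
      have hb : b < 2 := by omega
      set j₀ := i₀ / 2 with hj₀_def
      have hi₀ : i₀ = 2*j₀ + a := by omega
      set n' := (n + a + b) / 2 with hn'_def
      have h2n' : 2*n' = n + a + b := by omega
      obtain ⟨q', hq'1, hq'2, hq'3, hUeq⟩ := A1 hq2 h1 h2 ha hb h2n' hU
      have hn'1 : 1 ≤ n' := le_trans (Nat.one_le_two_pow) hq'2
      have hn'lt : n' < n := by omega
      obtain ⟨lam₁, lam₂, hsum, huniq⟩ :=
        IH n' hn'lt q' hq'1 hq'2 hq'3 (tmWord j₀ n') (tmWord_length _ _) (isFactor_tmWord _ _)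
      obtain ⟨⟨x₁, x₂⟩, ⟨hx1len, hx2len, hxfac⟩, hxuniq⟩ := huniq
      obtain ⟨h, hocc⟩ := hxfac
      obtain ⟨e1, e2, e3⟩ := occ_split hocc
      dsimp only at e1 e2 e3 hx1len hx2len
      rw [hx1len] at e1 e2 e3
      rw [tmWord_length] at e2 e3
      rw [hx2len] at e3
      set l₁ := 2*lam₁ + a with hl₁_def
      set l₂ := 2*lam₂ + b with hl₂_def
      set j := h + lam₁ with hj_def
      have hwj : Eqw j j₀ n' := tmWord_eq_iff.mp e2.symm
      set v₀1 := tmWord (2*h) l₁ with hv01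
      set v₀2 := tmWord (2*h + l₁ + n) l₂ with hv02
      have hup : Eqw (2*j+a) (2*j₀+a) n := eqw_shift (eq_up hwj) a n (by omega)
      have hwmid : w = tmWord (2*h + l₁) n := by
        rw [hw, show 2*h + l₁ = 2*j + a by omega, hi₀]
        exact tmWord_eq_iff.mpr (eqw_symm' hup)
      refine ⟨l₁, l₂, by omega, (v₀1, v₀2), ⟨tmWord_length _ _, tmWord_length _ _, ?_⟩, ?_⟩
      · exact occ_join hv01 hwmid hv02
      · rintro ⟨v1, v2⟩ ⟨hv1len, hv2len, g', hgocc⟩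
        obtain ⟨f1, f2, f3⟩ := occ_split hgocc
        dsimp only at f1 f2 f3 hv1len hv2len
        rw [hv1len] at f1 f2 f3
        rw [hlen] at f2 f3
        rw [hv2len] at f3
        set i' := g' + l₁ with hi'_def
        have hEqw : Eqw i' i₀ n := tmWord_eq_iff.mp (f2.symm.trans hw)
        have hpar : i' % 2 = a := (tm_parity hn4 hEqw).trans ha_def.symm
        obtain ⟨j', hj'⟩ : ∃ j', i' = 2*j' + a := ⟨i'/2, by omega⟩
        have hj'lam : lam₁ ≤ j' := by omega
        have hjlam : lam₁ ≤ j := by omega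
        have hdown : Eqw j' j₀ n' := by
          refine eq_down ha hb h2n' hn'1 (by omega) ?_
          rw [← hj', ← hi₀]
          exact hEqw
        have hwj' : Eqw j' j n' := eqw_trans hdown (eqw_symm' hwj)
        have hxx : (tmWord (j'-lam₁) lam₁, tmWord (j'+n') lam₂) = (x₁, x₂) := by
          apply hxuniq
          refine ⟨tmWord_length _ _, tmWord_length _ _,
            occ_join (g := j'-lam₁) (n := n') (l₁ := lam₁) (l₂ := lam₂) rfl ?_ ?_⟩
          · rw [show j'-lam₁+lam₁ = j' by omega]
            exact tmWord_eq_iff.mpr (eqw_symm' hdown)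
          · rw [show j'-lam₁+lam₁ = j' by omega]
        have hA : tmWord (j'-lam₁) lam₁ = x₁ := (Prod.mk.injEq _ _ _ _ ▸ hxx).1
        have hB : tmWord (j'+n') lam₂ = x₂ := (Prod.mk.injEq _ _ _ _ ▸ hxx).2
        have hx1e : Eqw (j'-lam₁) (j-lam₁) lam₁ := by
          refine tmWord_eq_iff.mp (hA.trans ?_)
          rw [e1, show j - lam₁ = h by omega]
        have hx2e : Eqw (j'+n') (j+n') lam₂ := tmWord_eq_iff.mp (hB.trans e3)
        have hctxL := ctxL ha hj'lam hjlam hwj' hn'1 hx1e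
        have hctxR := ctxR hb hwj' hn'1 hx2e
        have hg' : g' = 2*(j'-lam₁) := by omega
        simp only [Prod.mk.injEq]
        constructor
        · rw [f1, hv01, hg', show (2:ℕ)*h = 2*(j-lam₁) by omega]
          exact tmWord_eq_iff.mpr hctxL
        · rw [f3, hv02, show g' + l₁ + n = 2*(j'+n') - b by omega,
            show 2*h + l₁ + n = 2*(j+n') - b by omega]
          exact tmWord_eq_iff.mpr hctxR

/-- Part (ii). -/
lemma partII {n q : ℕ} (hq : 1 ≤ q) (h1 : 2^q ≤ n) (h2 : n < 2^(q+1)) :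
    ∃ w : List (Fin 2), w.length = n ∧ IsFactor w ∧
      ∀ l₁ l₂ : ℕ, U n q < l₁ + l₂ →
        ∃ vv yy : List (Fin 2) × List (Fin 2), vv ≠ yy ∧
          vv.1.length = l₁ ∧ vv.2.length = l₂ ∧
          yy.1.length = l₁ ∧ yy.2.length = l₂ ∧
          IsFactor (vv.1 ++ w ++ vv.2) ∧ IsFactor (yy.1 ++ w ++ yy.2) := by
  obtain ⟨PA, PB, hG⟩ := A2 hq h1 h2
  obtain ⟨hP, hP', hEqG, hL, hR⟩ := hG
  set N := n + U n q with hN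
  have hnN : n ≤ N := by omega
  refine ⟨tmWord PA n, tmWord_length _ _, isFactor_tmWord _ _, ?_⟩
  intro l₁ l₂ hl
  set K := l₁ + PA + PB + N + 1 with hK
  have hK2 : K < 2^K := Nat.lt_two_pow_self
  set T := 3 * 2^K with hT
  have hshift : ∀ x ≤ PA + PB + N, tm (T + x) = tm x := by
    intro x hx
    exact tm_shift K x (by omega)
  set i := T + PA with hi
  set i' := T + PB with hi'
  have hil : l₁ ≤ i ∧ l₁ ≤ i' := by
    constructor <;> · have : K ≤ 2^K := le_of_lt hK2; omega
  have hoccP : tmWord i n = tmWord PA n := by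
    rw [tmWord_eq_iff]
    intro d hd
    rw [hi, add_assoc]
    exact hshift (PA + d) (by omega)
  have hoccP' : tmWord i' n = tmWord PA n := by
    rw [tmWord_eq_iff]
    intro d hd
    rw [hi', add_assoc, hshift (PB + d) (by omega)]
    exact (hEqG d (by omega)).symm
  have hfac : ∀ x : ℕ, l₁ ≤ x → tmWord x n = tmWord PA n →
      IsFactor (tmWord (x - l₁) l₁ ++ tmWord PA n ++ tmWord (x + n) l₂) := by
    intro x hx hw
    refine ⟨x - l₁, ?_⟩
    have hlen : (tmWord (x - l₁) l₁ ++ tmWord PA n ++ tmWord (x + n) l₂).length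
        = l₁ + (n + l₂) := by
      simp [tmWord_length]; try omega
    rw [hlen, tmWord_append, tmWord_append, show x - l₁ + l₁ = x by omega, ← hw,
      List.append_assoc]
  refine ⟨(tmWord (i - l₁) l₁, tmWord (i + n) l₂), (tmWord (i' - l₁) l₁, tmWord (i' + n) l₂),
    ?_, tmWord_length _ _, tmWord_length _ _, tmWord_length _ _, tmWord_length _ _,
    hfac i hil.1 hoccP, hfac i' hil.2 hoccP'⟩
  rcases Nat.eq_zero_or_pos l₁ with hl1 | hl1
  · have hUl : U n q < l₂ := by omega
    have hne : tm (i + n + U n q) ≠ tm (i' + n + U n q) := by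
      rw [show i + n + U n q = T + (PA + N) by rw [hi]; omega,
        show i' + n + U n q = T + (PB + N) by rw [hi']; omega,
        hshift (PA + N) (by omega), hshift (PB + N) (by omega)]
      exact hR
    intro hc
    have := congrArg Prod.snd hc
    simp only at this
    exact tmWord_ne hUl hne this
  · have hne : tm ((i - l₁) + (l₁ - 1)) ≠ tm ((i' - l₁) + (l₁ - 1)) := by
      rw [show i - l₁ + (l₁ - 1) = T + (PA - 1) by omega,
        show i' - l₁ + (l₁ - 1) = T + (PB - 1) by omega,
        hshift (PA - 1) (by omega), hshift (PB - 1) (by omega)]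
      exact hL
    intro hc
    have := congrArg Prod.fst hc
    simp only at this
    exact tmWord_ne (by omega) hne this

end ThueMorseAux

theorem thueMorse_unique_extension_lower_bound (n q : ℕ) (hn : 4 ≤ n) (hq : 1 ≤ q)
    (h1 : 2 ^ q ≤ n) (h2 : n < 2 ^ (q + 1)) :
    (∀ w : List (Fin 2), w.length = n → IsFactor w →
      ∃ l₁ l₂ : ℕ, l₁ + l₂ = (2 ^ (q - 1) - n % 2 ^ (q - 1)) % 2 ^ (q - 1) ∧
        ∃! vv : List (Fin 2) × List (Fin 2),
          vv.1.length = l₁ ∧ vv.2.length = l₂ ∧ IsFactor (vv.1 ++ w ++ vv.2)) ∧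
    (∃ w : List (Fin 2), w.length = n ∧ IsFactor w ∧
      ∀ l₁ l₂ : ℕ, (2 ^ (q - 1) - n % 2 ^ (q - 1)) % 2 ^ (q - 1) < l₁ + l₂ →
        ∃ vv yy : List (Fin 2) × List (Fin 2), vv ≠ yy ∧
          vv.1.length = l₁ ∧ vv.2.length = l₂ ∧
          yy.1.length = l₁ ∧ yy.2.length = l₂ ∧
          IsFactor (vv.1 ++ w ++ vv.2) ∧ IsFactor (yy.1 ++ w ++ yy.2)) := by
  exact ⟨fun w hw hfac => partI n q hq h1 h2 w hw hfac, partII hq h1 h2⟩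
end

section
/- In the odd frame of the Thue–Morse word, the pairs 00 and 11 alternate: consider the blocks B_k = t(2k+1) t(2k+2) for k ∈ ℕ, and call B_k a pair if t(2k+1) = t(2k+2). If k < l, B_k and B_l are pairs, and B_m is not a pair for every m with k < m < l, then t(2k+1) ≠ t(2l+1). -/
lemma tm_even (n : ℕ) : tm (2 * n) = tm n := by
  rcases Nat.eq_zero_or_pos n with h | h
  · simp [h]
  · unfold tm
    rw [Nat.digits_def' (by norm_num : 1 < 2) (by omega : 0 < 2 * n)]
    have h1 : 2 * n % 2 = 0 := by omega
    have h2 : 2 * n / 2 = n := by omega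
    rw [h1, h2]
    simp

lemma tm_odd (n : ℕ) : tm (2 * n + 1) = 1 + tm n := by
  unfold tm
  rw [Nat.digits_def' (by norm_num : 1 < 2) (by omega : 0 < 2 * n + 1)]
  have h1 : (2 * n + 1) % 2 = 1 := by omega
  have h2 : (2 * n + 1) / 2 = n := by omega
  rw [h1, h2]
  push_cast
  simp
  apply Fin.ext
  simp [Fin.val_add]

theorem thueMorse_pairs_alternate_in_odd_frame (k l : ℕ) (hkl : k < l)
    (hk : tm (2 * k + 1) = tm (2 * k + 2)) (hl : tm (2 * l + 1) = tm (2 * l + 2))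
    (hmid : ∀ m, k < m → m < l → tm (2 * m + 1) ≠ tm (2 * m + 2)) :
    tm (2 * k + 1) ≠ tm (2 * l + 1) := by
  have e1 : ∀ m : ℕ, tm (2 * m + 2) = tm (m + 1) := by
    intro m
    have : 2 * m + 2 = 2 * (m + 1) := by ring
    rw [this, tm_even]
  rw [tm_odd, tm_odd, e1] at *
  -- hk : 1 + tm k = tm (k+1), goal : 1 + tm k ≠ 1 + tm l
  have mid : ∀ m, k < m → m < l → tm (m + 1) = tm m := by
    intro m h1 h2
    have := hmid m h1 h2
    rw [tm_odd, e1] at this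
    revert this
    generalize tm m = a; generalize tm (m+1) = b
    fin_cases a <;> fin_cases b <;> decide
  have chain : ∀ d : ℕ, k + 1 + d ≤ l → tm (k + 1 + d) = tm (k + 1) := by
    intro d
    induction d with
    | zero => intro _; rfl
    | succ d ih =>
      intro hle
      have h1 : k < k + 1 + d := by omega
      have h2 : k + 1 + d < l := by omega
      have : k + 1 + (d + 1) = (k + 1 + d) + 1 := by ring
      rw [this, mid _ h1 h2, ih (by omega)]
  have hkl' : tm l = tm (k + 1) := by
    have := chain (l - (k + 1)) (by omega)
    rwa [show k + 1 + (l - (k+1)) = l by omega] at this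
  rw [hkl', ← hk]
  generalize tm k = a
  fin_cases a <;> decide
end
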